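/- Let B ∈ (0,1). Let T = (V,E) be a finite tree, Λ ⊆ V a subset of the vertices, and u a vertex of T. Let τ_1, τ_2 : Λ → {1,2} be two configurations on Λ which differ only on a subset U ⊆ Λ. Then |π_T(σ_u = 1 | σ_Λ = τ_1) − π_T(σ_u = 1 | σ_Λ = τ_2)| ≤ Σ_{v∈U} ((1−B)/(1+B))^{dist(u,v)}, where π_T is the Ising distribution on T with parameter B and dist(u,v) denotes the graph distance between u and v in T. -/

import Mathlib

open scoped Classical

/-- Number of monochromatic edges of the configuration `σ` in the graph `G`. -/
noncomputable def mEdges {W : Type} [Fintype W] (G : SimpleGraph W) {q : ℕ}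
    (σ : W → Fin q) : ℕ :=
  (Finset.univ.filter fun e : Sym2 W => e ∈ G.edgeSet ∧ ∀ x ∈ e, ∀ y ∈ e, σ x = σ y).card

/-- Conditional probability of the event `A` given the event `C`, under the `q`-state
Potts distribution on `G` with parameter `B` (the Ising model is the case `q = 2`). -/
noncomputable def pottsCond {W : Type} [Fintype W] (G : SimpleGraph W) (q : ℕ) (B : ℝ)
    (A C : Set (W → Fin q)) : ℝ :=
  (∑ σ : W → Fin q, if σ ∈ A ∧ σ ∈ C then B ^ mEdges G σ else 0) /
    ∑ σ : W → Fin q, if σ ∈ C then B ^ mEdges G σ else 0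


/-- monochromatic edges inside a vertex set `A` -/
noncomputable def mIn {V : Type} [Fintype V] (T : SimpleGraph V) (A : Set V)
    (σ : V → Fin 2) : ℕ :=
  (Finset.univ.filter fun e : Sym2 V =>
    e ∈ T.edgeSet ∧ (∀ x ∈ e, x ∈ A) ∧ ∀ x ∈ e, ∀ y ∈ e, σ x = σ y).card

lemma mIn_congr {V : Type} [Fintype V] (T : SimpleGraph V) (A : Set V)
    {a b : V → Fin 2} (h : ∀ x ∈ A, a x = b x) : mIn T A a = mIn T A b := by
  unfold mIn
  congr 1
  refine Finset.filter_congr fun e _ => ?_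
  constructor
  · rintro ⟨h1, h2, h3⟩
    exact ⟨h1, h2, fun x hx y hy => by rw [← h (x) (h2 x hx), ← h y (h2 y hy)]; exact h3 x hx y hy⟩
  · rintro ⟨h1, h2, h3⟩
    exact ⟨h1, h2, fun x hx y hy => by rw [h (x) (h2 x hx), h y (h2 y hy)]; exact h3 x hx y hy⟩

set_option maxHeartbeats 1000000 in
lemma mEdges_split {V : Type} [Fintype V] (T : SimpleGraph V) (S : Set V) (v w : V)
    (hadj : T.Adj v w) (hvS : v ∉ S) (hwS : w ∈ S)
    (hsplit : ∀ e ∈ T.edgeSet, e ≠ s(v, w) → (∀ x ∈ e, x ∈ S) ∨ (∀ x ∈ e, x ∉ S))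
    (σ : V → Fin 2) :
    mEdges T σ = mIn T S σ + mIn T Sᶜ σ + (if σ v = σ w then 1 else 0) := by
  classical
  rw [mEdges, mIn, mIn, Finset.card_filter, Finset.card_filter, Finset.card_filter]
  have h3 : (if σ v = σ w then (1:ℕ) else 0)
      = ∑ e : Sym2 V, if e = s(v, w) ∧ e ∈ T.edgeSet ∧ (∀ x ∈ e, ∀ y ∈ e, σ x = σ y)
          then 1 else 0 := by
    have hmem : s(v, w) ∈ T.edgeSet := hadj
    have hmono : (∀ x ∈ s(v, w), ∀ y ∈ s(v, w), σ x = σ y) ↔ σ v = σ w := by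
      constructor
      · intro h
        exact h v (by simp) w (by simp)
      · intro h x hx y hy
        rw [Sym2.mem_iff] at hx hy
        rcases hx with rfl | rfl <;> rcases hy with rfl | rfl <;> simp [h]
    have hpt : ∀ e : Sym2 V,
        (if e = s(v, w) ∧ e ∈ T.edgeSet ∧ (∀ x ∈ e, ∀ y ∈ e, σ x = σ y) then (1:ℕ) else 0)
          = if e = s(v, w) then (if e ∈ T.edgeSet ∧ (∀ x ∈ e, ∀ y ∈ e, σ x = σ y)
              then (1:ℕ) else 0) else 0 := by
      intro e
      by_cases h : e = s(v, w) <;> simp [h]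
    rw [Finset.sum_congr rfl fun e _ => hpt e, Finset.sum_ite_eq' Finset.univ s(v, w)]
    rw [if_pos (Finset.mem_univ _)]
    by_cases h : σ v = σ w
    · rw [if_pos h, if_pos ⟨hmem, hmono.mpr h⟩]
    · rw [if_neg h, if_neg (fun hX => h (hmono.mp hX.2))]
  rw [h3, ← Finset.sum_add_distrib, ← Finset.sum_add_distrib]
  refine Finset.sum_congr rfl fun e he => ?_
  induction e using Sym2.ind with
  | _ a b =>
  have ha : a ∈ s(a, b) := by simp
  by_cases h1 : s(a, b) ∈ T.edgeSet
  · by_cases h2 : ∀ x ∈ s(a, b), ∀ y ∈ s(a, b), σ x = σ y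
    · by_cases h4 : s(a, b) = s(v, w)
      · have hnS : ¬ ∀ x ∈ s(a, b), x ∈ S := fun h => hvS (h v (by rw [h4]; simp))
        have hnSc : ¬ ∀ x ∈ s(a, b), x ∈ Sᶜ := fun h => (h w (by rw [h4]; simp)) hwS
        split_ifs <;> first | omega | tauto
      · rcases hsplit s(a, b) h1 h4 with hs | hs
        · have hS' : ∀ x ∈ s(a, b), x ∈ S := hs
          have hnSc : ¬ ∀ x ∈ s(a, b), x ∈ Sᶜ :=
            fun h => (h a ha) (hs a ha)
          split_ifs <;> first | omega | tauto
        · have hSc' : ∀ x ∈ s(a, b), x ∈ Sᶜ := hs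
          have hnS : ¬ ∀ x ∈ s(a, b), x ∈ S :=
            fun h => (hs a ha) (h a ha)
          split_ifs <;> first | omega | tauto
    · split_ifs <;> first | omega | tauto
  · split_ifs <;> first | omega | tauto

/-- constrained partition function -/
noncomputable def ZC {V : Type} [Fintype V] (T : SimpleGraph V) (B : ℝ)
    (P : (V → Fin 2) → Prop) : ℝ :=
  ∑ σ : V → Fin 2, if P σ then B ^ mEdges T σ else 0

lemma ZC_nonneg {V : Type} [Fintype V] (T : SimpleGraph V) {B : ℝ} (hB : 0 < B)
    (P : (V → Fin 2) → Prop) : 0 ≤ ZC T B P := by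
  refine Finset.sum_nonneg fun σ _ => ?_
  by_cases h : P σ <;> simp [h, (pow_pos hB _).le]

lemma ZC_pos {V : Type} [Fintype V] (T : SimpleGraph V) {B : ℝ} (hB : 0 < B)
    {P : (V → Fin 2) → Prop} (hP : ∃ σ, P σ) : 0 < ZC T B P := by
  obtain ⟨σ0, h0⟩ := hP
  refine Finset.sum_pos' (fun σ _ => ?_) ⟨σ0, Finset.mem_univ _, ?_⟩
  · by_cases h : P σ <;> simp [h, (pow_pos hB _).le]
  · simp [h0, pow_pos hB]

lemma ZC_mono {V : Type} [Fintype V] (T : SimpleGraph V) {B : ℝ} (hB : 0 < B)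
    {P Q : (V → Fin 2) → Prop} (h : ∀ σ, P σ → Q σ) : ZC T B P ≤ ZC T B Q := by
  refine Finset.sum_le_sum fun σ _ => ?_
  by_cases hp : P σ
  · simp [hp, h σ hp]
  · by_cases hq : Q σ <;> simp [hp, hq, (pow_pos hB _).le]

lemma ZC_congr {V : Type} [Fintype V] (T : SimpleGraph V) (B : ℝ)
    {P Q : (V → Fin 2) → Prop} (h : ∀ σ, P σ ↔ Q σ) : ZC T B P = ZC T B Q := by
  refine Finset.sum_congr rfl fun σ _ => ?_
  by_cases hp : P σ
  · simp [hp, (h σ).mp hp]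
  · rw [if_neg hp, if_neg (fun hq => hp ((h σ).mpr hq))]

/-- the conditional probability `π(σ_u = 0 | σ_Λ = τ)` -/
noncomputable def fI {V : Type} [Fintype V] (T : SimpleGraph V) (B : ℝ) (u : V)
    (Λ : Finset V) (τ : V → Fin 2) : ℝ :=
  ZC T B (fun σ => (∀ x ∈ Λ, σ x = τ x) ∧ σ u = 0) /
    ZC T B (fun σ => ∀ x ∈ Λ, σ x = τ x)

lemma fI_mem_Icc {V : Type} [Fintype V] (T : SimpleGraph V) {B : ℝ} (hB : 0 < B) (u : V)
    (Λ : Finset V) (τ : V → Fin 2) : fI T B u Λ τ ∈ Set.Icc (0:ℝ) 1 := by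
  have hden : 0 < ZC T B (fun σ => ∀ x ∈ Λ, σ x = τ x) :=
    ZC_pos T hB ⟨τ, fun x _ => rfl⟩
  unfold fI
  constructor
  · exact div_nonneg (ZC_nonneg T hB _) hden.le
  · rw [div_le_one hden]
    exact ZC_mono T hB fun σ h => h.1

lemma fI_congr {V : Type} [Fintype V] (T : SimpleGraph V) (B : ℝ) (u : V)
    (Λ : Finset V) {τ τ' : V → Fin 2} (h : ∀ x ∈ Λ, τ x = τ' x) :
    fI T B u Λ τ = fI T B u Λ τ' := by
  unfold fI
  rw [ZC_congr T B (P := fun σ => (∀ x ∈ Λ, σ x = τ x) ∧ σ u = 0)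
      (Q := fun σ => (∀ x ∈ Λ, σ x = τ' x) ∧ σ u = 0) ?_,
    ZC_congr T B (P := fun σ => ∀ x ∈ Λ, σ x = τ x)
      (Q := fun σ => ∀ x ∈ Λ, σ x = τ' x) ?_]
  · intro σ
    exact ⟨fun h1 x hx => (h1 x hx).trans (h x hx),
           fun h1 x hx => (h1 x hx).trans (h x hx).symm⟩
  · intro σ
    exact ⟨fun h1 => ⟨fun x hx => (h1.1 x hx).trans (h x hx), h1.2⟩,
           fun h1 => ⟨fun x hx => (h1.1 x hx).trans (h x hx).symm, h1.2⟩⟩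

lemma sum_factor {V : Type} [Fintype V] (S : Set V) (F G : (V → Fin 2) → ℝ)
    (hF : ∀ a b : V → Fin 2, (∀ x ∈ S, a x = b x) → F a = F b)
    (hG : ∀ a b : V → Fin 2, (∀ x ∉ S, a x = b x) → G a = G b) :
    (∑ a : V → Fin 2, F a) * (∑ a : V → Fin 2, G a)
      = (Fintype.card (V → Fin 2) : ℝ) * ∑ a : V → Fin 2, F a * G a := by
  classical
  set m : (V → Fin 2) → (V → Fin 2) → (V → Fin 2) := fun a b x => if x ∈ S then a x else b x
    with hm
  have hinv : Function.Involutive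
      (fun p : (V → Fin 2) × (V → Fin 2) => (m p.1 p.2, m p.2 p.1)) := by
    rintro ⟨a, b⟩
    simp only [Prod.mk.injEq]
    constructor <;> funext x <;> by_cases hx : x ∈ S <;> simp [hm, hx]
  have key : ∑ p : (V → Fin 2) × (V → Fin 2), F p.1 * G p.2
      = ∑ p : (V → Fin 2) × (V → Fin 2), F p.1 * G p.1 := by
    have h1 := Equiv.sum_comp (Function.Involutive.toPerm _ hinv)
      (fun p : (V → Fin 2) × (V → Fin 2) => F p.1 * G p.2)
    rw [← h1]
    refine Finset.sum_congr rfl fun p _ => ?_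
    have hp1 : F (((Function.Involutive.toPerm _ hinv) p).1) = F p.1 := by
      refine hF _ _ fun x hx => ?_
      show m p.1 p.2 x = p.1 x
      simp [hm, hx]
    have hp2 : G (((Function.Involutive.toPerm _ hinv) p).2) = G p.1 := by
      refine hG _ _ fun x hx => ?_
      show m p.2 p.1 x = p.1 x
      simp [hm, hx]
    rw [hp1, hp2]
  rw [Finset.sum_mul_sum, ← Fintype.sum_prod_type', key]
  rw [Fintype.sum_prod_type]
  simp [Finset.sum_const, mul_comm, Finset.mul_sum]

lemma master {V : Type} [Fintype V] (T : SimpleGraph V) (B : ℝ) (S : Set V) (v w : V)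
    (hadj : T.Adj v w) (hvS : v ∉ S) (hwS : w ∈ S)
    (hsplit : ∀ e ∈ T.edgeSet, e ≠ s(v, w) → (∀ x ∈ e, x ∈ S) ∨ (∀ x ∈ e, x ∉ S))
    (Q R : (V → Fin 2) → Prop)
    (hQ : ∀ a b : V → Fin 2, (∀ x ∈ S, a x = b x) → (Q a ↔ Q b))
    (hR : ∀ a b : V → Fin 2, (∀ x ∉ S, a x = b x) → (R a ↔ R b)) :
    (Fintype.card (V → Fin 2) : ℝ) * ZC T B (fun σ => Q σ ∧ R σ)
      = ∑ s : Fin 2, ∑ t : Fin 2, B ^ (if s = t then 1 else 0) *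
          ((∑ σ : V → Fin 2, if R σ ∧ σ v = s then B ^ mIn T Sᶜ σ else 0) *
           (∑ σ : V → Fin 2, if Q σ ∧ σ w = t then B ^ mIn T S σ else 0)) := by
  classical
  have two_cases : ∀ z : Fin 2, z = 0 ∨ z = 1 := by decide
  calc (Fintype.card (V → Fin 2) : ℝ) * ZC T B (fun σ => Q σ ∧ R σ)
      = (Fintype.card (V → Fin 2) : ℝ) * ∑ σ : V → Fin 2, ∑ s : Fin 2, ∑ t : Fin 2,
          (if (Q σ ∧ σ w = t) ∧ (R σ ∧ σ v = s) then B ^ mEdges T σ else 0) := by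
        rw [ZC]
        congr 1
        refine Finset.sum_congr rfl fun σ _ => ?_
        by_cases hQσ : Q σ <;> by_cases hRσ : R σ <;>
          rcases two_cases (σ v) with hv | hv <;> rcases two_cases (σ w) with hw | hw <;>
          simp [hQσ, hRσ, hv, hw, Fin.sum_univ_two]
    _ = ∑ s : Fin 2, ∑ t : Fin 2, (Fintype.card (V → Fin 2) : ℝ) *
          ∑ σ : V → Fin 2,
            (if (Q σ ∧ σ w = t) ∧ (R σ ∧ σ v = s) then B ^ mEdges T σ else 0) := by
        rw [Finset.sum_comm, Finset.mul_sum]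
        refine Finset.sum_congr rfl fun s _ => ?_
        rw [Finset.sum_comm, Finset.mul_sum]
    _ = ∑ s : Fin 2, ∑ t : Fin 2, B ^ (if s = t then 1 else 0) *
          ((∑ σ : V → Fin 2, if R σ ∧ σ v = s then B ^ mIn T Sᶜ σ else 0) *
           (∑ σ : V → Fin 2, if Q σ ∧ σ w = t then B ^ mIn T S σ else 0)) := by
        refine Finset.sum_congr rfl fun s _ => Finset.sum_congr rfl fun t _ => ?_
        calc (Fintype.card (V → Fin 2) : ℝ) * ∑ σ : V → Fin 2,
              (if (Q σ ∧ σ w = t) ∧ (R σ ∧ σ v = s) then B ^ mEdges T σ else 0)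
            = (Fintype.card (V → Fin 2) : ℝ) * ∑ σ : V → Fin 2,
                B ^ (if s = t then 1 else 0) *
                  ((if Q σ ∧ σ w = t then (B:ℝ) ^ mIn T S σ else 0) *
                   (if R σ ∧ σ v = s then (B:ℝ) ^ mIn T Sᶜ σ else 0)) := by
              congr 1
              refine Finset.sum_congr rfl fun σ _ => ?_
              by_cases h1 : Q σ ∧ σ w = t
              · by_cases h2 : R σ ∧ σ v = s
                · have hms := mEdges_split T S v w hadj hvS hwS hsplit σ
                  simp [hms, h1.2, h2.2, pow_add, h1.1, h2.1]
                  try ring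
                · simp [h2, fun hX : _ ∧ _ => h2 hX.2]
              · simp [h1, fun hX : _ ∧ _ => h1 hX.1]
          _ = B ^ (if s = t then 1 else 0) *
                ((Fintype.card (V → Fin 2) : ℝ) * ∑ σ : V → Fin 2,
                  ((if Q σ ∧ σ w = t then (B:ℝ) ^ mIn T S σ else 0) *
                   (if R σ ∧ σ v = s then (B:ℝ) ^ mIn T Sᶜ σ else 0))) := by
              rw [← Finset.mul_sum]
              ring
          _ = B ^ (if s = t then 1 else 0) *
                ((∑ σ : V → Fin 2, if R σ ∧ σ v = s then B ^ mIn T Sᶜ σ else 0) *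
                 (∑ σ : V → Fin 2, if Q σ ∧ σ w = t then B ^ mIn T S σ else 0)) := by
              congr 1
              rw [← sum_factor S (fun σ => if Q σ ∧ σ w = t then (B:ℝ) ^ mIn T S σ else 0)
                  (fun σ => if R σ ∧ σ v = s then (B:ℝ) ^ mIn T Sᶜ σ else 0) ?_ ?_]
              · rw [mul_comm]
              · intro a b hab
                beta_reduce
                have hQab : Q a ↔ Q b := hQ a b hab
                have hw' : a w = b w := hab w hwS
                have hm : mIn T S a = mIn T S b := mIn_congr T S hab
                by_cases h : Q a ∧ a w = t
                · rw [if_pos h, if_pos ⟨hQab.mp h.1, hw' ▸ h.2⟩, hm]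
                · rw [if_neg h, if_neg (fun hX => h ⟨hQab.mpr hX.1, hw'.symm ▸ hX.2⟩)]
              · intro a b hab
                beta_reduce
                have hRab : R a ↔ R b := hR a b hab
                have hv' : a v = b v := hab v hvS
                have hm : mIn T Sᶜ a = mIn T Sᶜ b := mIn_congr T Sᶜ (fun x hx => hab x hx)
                by_cases h : R a ∧ a v = s
                · rw [if_pos h, if_pos ⟨hRab.mp h.1, hv' ▸ h.2⟩, hm]
                · rw [if_neg h, if_neg (fun hX => h ⟨hRab.mpr hX.1, hv'.symm ▸ hX.2⟩)]

lemma tree_step {V : Type} [Fintype V] (T : SimpleGraph V) (hT : T.IsTree) (u v : V)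
    {n : ℕ} (hd : T.dist v u = n + 1) :
    ∃ w : V, T.Adj v w ∧ T.dist w u = n ∧ ∃ S : Set V, v ∉ S ∧ w ∈ S ∧ u ∈ S ∧
      (∀ e ∈ T.edgeSet, e ≠ s(v, w) → (∀ x ∈ e, x ∈ S) ∨ (∀ x ∈ e, x ∉ S)) := by
  classical
  have hconn := hT.isConnected
  obtain ⟨p, hp⟩ := hconn.exists_walk_length_eq_dist v u
  have hpath : p.bypass.IsPath := SimpleGraph.Walk.bypass_isPath p
  have hlen : p.bypass.length = n + 1 := by
    have h1 : p.bypass.length ≤ n + 1 := by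
      calc p.bypass.length ≤ p.length := SimpleGraph.Walk.length_bypass_le p
        _ = n + 1 := by rw [hp, hd]
    have h2 : n + 1 ≤ p.bypass.length := by
      rw [← hd]
      exact SimpleGraph.dist_le p.bypass
    omega
  generalize hg : p.bypass = p2 at hpath hlen
  cases p2 with
  | nil => simp at hlen
  | @cons _ w _ hadj q =>
    rw [SimpleGraph.Walk.length_cons] at hlen
    have hqlen : q.length = n := by omega
    rw [SimpleGraph.Walk.cons_isPath_iff] at hpath
    obtain ⟨hqpath, hvsup⟩ := hpath
    refine ⟨w, hadj, ?_, ?_⟩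
    · -- dist w u = n
      have h1 : T.dist w u ≤ n := by
        rw [← hqlen]
        exact SimpleGraph.dist_le q
      have h2 : n + 1 ≤ 1 + T.dist w u := by
        rw [← hd]
        calc T.dist v u ≤ T.dist v w + T.dist w u := hconn.dist_triangle
          _ ≤ 1 + T.dist w u := by
              have : T.dist v w ≤ 1 := by
                have := SimpleGraph.dist_le (SimpleGraph.Walk.cons hadj SimpleGraph.Walk.nil)
                simpa using this
              omega
      omega
    · refine ⟨{x | (T.deleteEdges {s(v, w)}).Reachable w x}, ?_, ?_, ?_, ?_⟩
      · -- v not reachable from w after deleting the edge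
        intro hv
        have hbridge : T.IsBridge s(v, w) :=
          (SimpleGraph.isAcyclic_iff_forall_edge_isBridge.mp hT.IsAcyclic) hadj
        rw [SimpleGraph.isBridge_iff] at hbridge
        exact hbridge (hv.symm)
      · exact SimpleGraph.Reachable.refl w
      · -- u reachable from w
        have hno : ∀ e ∈ q.edges, e ∉ ({s(v, w)} : Set (Sym2 V)) := by
          intro e he hmem
          rw [Set.mem_singleton_iff] at hmem
          subst hmem
          exact hvsup (q.fst_mem_support_of_mem_edges he)
        exact ⟨q.toDeleteEdges {s(v, w)} hno⟩
      · intro e he hne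
        induction e using Sym2.ind with
        | _ a b =>
          have hab : T.Adj a b := he
          have hab' : (T.deleteEdges {s(v, w)}).Adj a b := by
            rw [SimpleGraph.deleteEdges_adj]
            exact ⟨hab, by simpa using hne⟩
          have hiff : (T.deleteEdges {s(v, w)}).Reachable w a ↔
              (T.deleteEdges {s(v, w)}).Reachable w b :=
            ⟨fun h => h.trans hab'.reachable, fun h => h.trans hab'.symm.reachable⟩
          by_cases hA : (T.deleteEdges {s(v, w)}).Reachable w a
          · left
            intro x hx
            rw [Sym2.mem_iff] at hx
            rcases hx with rfl | rfl
            · exact hA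
            · exact hiff.mp hA
          · right
            intro x hx
            rw [Sym2.mem_iff] at hx
            rcases hx with rfl | rfl
            · exact hA
            · exact fun hB => hA (hiff.mpr hB)

lemma sum_ite_congr' {α : Type} [Fintype α] (P Q : α → Prop)
    (iP : ∀ a, Decidable (P a)) (iQ : ∀ a, Decidable (Q a)) (f g : α → ℝ)
    (hPQ : ∀ a, P a ↔ Q a) (hfg : ∀ a, P a → f a = g a) :
    (∑ a, @ite _ (P a) (iP a) (f a) 0) = ∑ a, @ite _ (Q a) (iQ a) (g a) 0 := by
  refine Finset.sum_congr rfl fun a _ => ?_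
  by_cases h : P a
  · rw [if_pos h, if_pos ((hPQ a).mp h), hfg a h]
  · rw [if_neg h, if_neg (fun hq => h ((hPQ a).mpr hq))]

noncomputable def ZIn {V : Type} [Fintype V] (T : SimpleGraph V) (B : ℝ) (A : Set V)
    (P : (V → Fin 2) → Prop) : ℝ :=
  ∑ σ : V → Fin 2, if P σ then B ^ mIn T A σ else 0

lemma ZIn_nonneg {V : Type} [Fintype V] (T : SimpleGraph V) {B : ℝ} (hB : 0 < B)
    (A : Set V) (P : (V → Fin 2) → Prop) : 0 ≤ ZIn T B A P := by
  refine Finset.sum_nonneg fun σ _ => ?_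
  by_cases h : P σ <;> simp [h, (pow_pos hB _).le]

lemma ZIn_pos {V : Type} [Fintype V] (T : SimpleGraph V) {B : ℝ} (hB : 0 < B)
    (A : Set V) {P : (V → Fin 2) → Prop} (hP : ∃ σ, P σ) : 0 < ZIn T B A P := by
  obtain ⟨σ0, h0⟩ := hP
  refine Finset.sum_pos' (fun σ _ => ?_) ⟨σ0, Finset.mem_univ _, ?_⟩
  · by_cases h : P σ <;> simp [h, (pow_pos hB _).le]
  · simp [h0, pow_pos hB]

lemma ZIn_mono {V : Type} [Fintype V] (T : SimpleGraph V) {B : ℝ} (hB : 0 < B)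
    (A : Set V) {P Q : (V → Fin 2) → Prop} (h : ∀ σ, P σ → Q σ) :
    ZIn T B A P ≤ ZIn T B A Q := by
  refine Finset.sum_le_sum fun σ _ => ?_
  by_cases hp : P σ
  · simp [hp, h σ hp]
  · by_cases hq : Q σ <;> simp [hp, hq, (pow_pos hB _).le]

lemma ZIn_congr {V : Type} [Fintype V] (T : SimpleGraph V) (B : ℝ) (A : Set V)
    {P Q : (V → Fin 2) → Prop} (h : ∀ σ, P σ ↔ Q σ) : ZIn T B A P = ZIn T B A Q := by
  refine Finset.sum_congr rfl fun σ _ => ?_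
  by_cases hp : P σ
  · simp [hp, (h σ).mp hp]
  · rw [if_neg hp, if_neg (fun hq => hp ((h σ).mpr hq))]

lemma ZIn_zero {V : Type} [Fintype V] (T : SimpleGraph V) (B : ℝ) (A : Set V)
    {P : (V → Fin 2) → Prop} (h : ∀ σ, ¬ P σ) : ZIn T B A P = 0 := by
  refine Finset.sum_eq_zero fun σ _ => ?_
  rw [if_neg (h σ)]

lemma ZIn_pin {V : Type} [Fintype V] (T : SimpleGraph V) (B : ℝ) (A : Set V)
    (P : (V → Fin 2) → Prop) (z : V) (s s₀ : Fin 2) :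
    ZIn T B A (fun σ => (P σ ∧ σ z = s₀) ∧ σ z = s)
      = if s = s₀ then ZIn T B A (fun σ => P σ ∧ σ z = s₀) else 0 := by
  by_cases hss : s = s₀
  · subst hss
    rw [if_pos rfl]
    exact ZIn_congr T B A fun σ => ⟨fun h => h.1, fun h => ⟨h, h.2⟩⟩
  · rw [if_neg hss]
    exact ZIn_zero T B A fun σ hX => hss (hX.2.symm.trans hX.1.2)

lemma master2 {V : Type} [Fintype V] (T : SimpleGraph V) (B : ℝ) (S : Set V) (v w : V)
    (hadj : T.Adj v w) (hvS : v ∉ S) (hwS : w ∈ S)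
    (hsplit : ∀ e ∈ T.edgeSet, e ≠ s(v, w) → (∀ x ∈ e, x ∈ S) ∨ (∀ x ∈ e, x ∉ S))
    (Q R : (V → Fin 2) → Prop)
    (hQ : ∀ a b : V → Fin 2, (∀ x ∈ S, a x = b x) → (Q a ↔ Q b))
    (hR : ∀ a b : V → Fin 2, (∀ x ∉ S, a x = b x) → (R a ↔ R b)) :
    (Fintype.card (V → Fin 2) : ℝ) * ZC T B (fun σ => Q σ ∧ R σ)
      = ∑ s : Fin 2, ∑ t : Fin 2, B ^ (if s = t then 1 else 0) *
          (ZIn T B Sᶜ (fun σ => R σ ∧ σ v = s) * ZIn T B S (fun σ => Q σ ∧ σ w = t)) := by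
  rw [master T B S v w hadj hvS hwS hsplit Q R hQ hR]
  refine Finset.sum_congr rfl fun s _ => Finset.sum_congr rfl fun t _ => ?_
  congr 1
  congr 1
  · rw [ZIn]
    exact sum_ite_congr' _ _ _ _ _ _ (fun σ => Iff.rfl) (fun σ _ => rfl)
  · rw [ZIn]
    exact sum_ite_congr' _ _ _ _ _ _ (fun σ => Iff.rfl) (fun σ _ => rfl)

lemma key_alg {B a b g0 g1 : ℝ} (hB0 : 0 < B) (hB1 : B < 1) (ha : 0 < a) (hb : 0 < b) :
    |(B * (g0 * a) + g1 * b) / (B * a + b) - (g0 * a + B * (g1 * b)) / (a + B * b)|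
      ≤ (1 - B) / (1 + B) * |g1 - g0| := by
  have hD0 : 0 < B * a + b := by positivity
  have hD1 : 0 < a + B * b := by positivity
  have hkey : (B * (g0 * a) + g1 * b) / (B * a + b) - (g0 * a + B * (g1 * b)) / (a + B * b)
      = ((1 - B ^ 2) * a * b * (g1 - g0)) / ((B * a + b) * (a + B * b)) := by
    field_simp
    ring
  rw [hkey, abs_div, abs_mul, abs_of_pos (mul_pos hD0 hD1)]
  have hB2 : B ^ 2 < 1 := by nlinarith
  have h1B2 : 0 < (1 - B ^ 2) * a * b :=
    mul_pos (mul_pos (by linarith) ha) hb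
  rw [abs_of_pos h1B2]
  have hcoef : (1 - B ^ 2) * a * b / ((B * a + b) * (a + B * b)) ≤ (1 - B) / (1 + B) := by
    rw [div_le_div_iff₀ (mul_pos hD0 hD1) (by linarith : (0:ℝ) < 1 + B)]
    nlinarith [mul_nonneg (mul_nonneg (by linarith : (0:ℝ) ≤ 1 - B) hB0.le) (sq_nonneg (a - b))]
  calc (1 - B ^ 2) * a * b * |g1 - g0| / ((B * a + b) * (a + B * b))
      = ((1 - B ^ 2) * a * b / ((B * a + b) * (a + B * b))) * |g1 - g0| := by ring
    _ ≤ (1 - B) / (1 + B) * |g1 - g0| := mul_le_mul_of_nonneg_right hcoef (abs_nonneg _)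

lemma single_site {V : Type} [Fintype V] (T : SimpleGraph V) (hT : T.IsTree) {B : ℝ}
    (hB0 : 0 < B) (hB1 : B < 1) (u : V) :
    ∀ n : ℕ, ∀ Λ : Finset V, ∀ v, v ∈ Λ → T.dist v u = n →
      ∀ τ τ' : V → Fin 2, (∀ x ∈ Λ, x ≠ v → τ x = τ' x) →
      |fI T B u Λ τ - fI T B u Λ τ'| ≤ ((1 - B) / (1 + B)) ^ n := by
  intro n
  induction n using Nat.strong_induction_on with
  | _ n IH =>
  intro Λ v hvΛ hd τ τ' hagree
  have fin2 : ∀ z : Fin 2, z = 0 ∨ z = 1 := by decide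
  have hlam0 : (0:ℝ) ≤ (1 - B) / (1 + B) := div_nonneg (by linarith) (by linarith)
  by_cases heq : τ v = τ' v
  · have heqf : fI T B u Λ τ = fI T B u Λ τ' := by
      refine fI_congr T B u Λ fun x hx => ?_
      by_cases hxv : x = v
      · subst hxv; exact heq
      · exact hagree x hx hxv
    rw [heqf, sub_self, abs_zero]
    positivity
  cases n with
  | zero =>
    have h1 := fI_mem_Icc T hB0 u Λ τ
    have h2 := fI_mem_Icc T hB0 u Λ τ'
    rw [pow_zero, abs_sub_le_iff]
    constructor <;> linarith [h1.1, h1.2, h2.1, h2.2]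
  | succ m =>
  obtain ⟨w, hadj, hdw, S, hvS, hwS, huS, hsplit⟩ := tree_step T hT u v hd
  have hwv : w ≠ v := fun h => (h ▸ hvS) hwS
  set lam := (1 - B) / (1 + B) with hlamdef
  set c := (Fintype.card (V → Fin 2) : ℝ) with hcdef
  have hcpos : 0 < c := by
    rw [hcdef]
    exact_mod_cast Fintype.card_pos
  set PS : (V → Fin 2) → Prop := fun σ => ∀ x ∈ Λ, x ≠ v → x ∈ S → σ x = τ x with hPSdef
  set PSc : (V → Fin 2) → Prop := fun σ => ∀ x ∈ Λ, x ≠ v → x ∉ S → σ x = τ x with hPScdef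
  have hPSdep : ∀ a b : V → Fin 2, (∀ x ∈ S, a x = b x) → (PS a ↔ PS b) := by
    intro a b hab
    simp only [hPSdef]
    constructor <;> intro h x hx h1 h2
    · rw [← hab x h2]; exact h x hx h1 h2
    · rw [hab x h2]; exact h x hx h1 h2
  have hPScdep : ∀ a b : V → Fin 2, (∀ x ∉ S, a x = b x) → (PSc a ↔ PSc b) := by
    intro a b hab
    simp only [hPScdef]
    constructor <;> intro h x hx h1 h2
    · rw [← hab x h2]; exact h x hx h1 h2
    · rw [hab x h2]; exact h x hx h1 h2
  set Y : Fin 2 → ℝ := fun t => ZIn T B S (fun σ => PS σ ∧ σ w = t) with hYdef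
  set Y0 : Fin 2 → ℝ := fun t => ZIn T B S (fun σ => (PS σ ∧ σ u = 0) ∧ σ w = t) with hY0def
  set X : Fin 2 → ℝ := fun s => ZIn T B Sᶜ (fun σ => PSc σ ∧ σ v = s) with hXdef
  set D : Fin 2 → ℝ := fun s =>
    B ^ (if s = (0:Fin 2) then 1 else 0) * Y 0 + B ^ (if s = (1:Fin 2) then 1 else 0) * Y 1
    with hDdef
  set N : Fin 2 → ℝ := fun s =>
    B ^ (if s = (0:Fin 2) then 1 else 0) * Y0 0 + B ^ (if s = (1:Fin 2) then 1 else 0) * Y0 1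
    with hNdef
  -- basic positivity
  have hXpos : ∀ s, 0 < X s := by
    intro s
    refine ZIn_pos T hB0 Sᶜ ⟨fun x => if x = v then s else τ x, ?_, if_pos rfl⟩
    intro x hx hxv _
    show (if x = v then s else τ x) = τ x
    exact if_neg hxv
  have hYnonneg : ∀ t, 0 ≤ Y t := fun t => ZIn_nonneg T hB0 S _
  have hY0nonneg : ∀ t, 0 ≤ Y0 t := fun t => ZIn_nonneg T hB0 S _
  have hYpos : ∀ t : Fin 2, (w ∈ Λ → τ w = t) → 0 < Y t := by
    intro t ht
    refine ZIn_pos T hB0 S ⟨fun x => if x = w then t else τ x, ?_, if_pos rfl⟩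
    intro x hx hxv hxS
    show (if x = w then t else τ x) = τ x
    by_cases hxw : x = w
    · rw [if_pos hxw, hxw]
      exact (ht (hxw ▸ hx)).symm
    · rw [if_neg hxw]
  have hYsome : ∃ t, 0 < Y t := by
    by_cases hwΛ : w ∈ Λ
    · exact ⟨τ w, hYpos (τ w) fun _ => rfl⟩
    · exact ⟨0, hYpos 0 fun h => absurd h hwΛ⟩
  have hDpos : ∀ s, 0 < D s := by
    intro s
    obtain ⟨t, ht⟩ := hYsome
    have h0 : 0 ≤ B ^ (if s = (0:Fin 2) then 1 else 0) * Y 0 :=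
      mul_nonneg (pow_nonneg hB0.le _) (hYnonneg 0)
    have h1 : 0 ≤ B ^ (if s = (1:Fin 2) then 1 else 0) * Y 1 :=
      mul_nonneg (pow_nonneg hB0.le _) (hYnonneg 1)
    rcases fin2 t with rfl | rfl
    · have : 0 < B ^ (if s = (0:Fin 2) then 1 else 0) * Y 0 :=
        mul_pos (pow_pos hB0 _) ht
      rw [hDdef]; dsimp only; linarith
    · have : 0 < B ^ (if s = (1:Fin 2) then 1 else 0) * Y 1 :=
        mul_pos (pow_pos hB0 _) ht
      rw [hDdef]; dsimp only; linarith
  -- the master computations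
  have hDen : ∀ s₀ : Fin 2,
      c * ZC T B (fun σ => PS σ ∧ (PSc σ ∧ σ v = s₀)) = X s₀ * D s₀ := by
    intro s₀
    rw [hcdef, master2 T B S v w hadj hvS hwS hsplit PS (fun σ => PSc σ ∧ σ v = s₀) hPSdep
      (fun a b hab => by
        have h := hPScdep a b hab
        have hv' : a v = b v := hab v hvS
        exact ⟨fun hx => ⟨h.mp hx.1, hv' ▸ hx.2⟩, fun hx => ⟨h.mpr hx.1, hv'.symm ▸ hx.2⟩⟩)]
    simp only [Fin.sum_univ_two, ZIn_pin T B Sᶜ PSc v]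
    rcases fin2 s₀ with rfl | rfl <;>
      (rw [hDdef, hXdef, hYdef]; norm_num; try ring)
  have hNum : ∀ s₀ : Fin 2,
      c * ZC T B (fun σ => (PS σ ∧ σ u = 0) ∧ (PSc σ ∧ σ v = s₀)) = X s₀ * N s₀ := by
    intro s₀
    rw [hcdef, master2 T B S v w hadj hvS hwS hsplit (fun σ => PS σ ∧ σ u = 0)
      (fun σ => PSc σ ∧ σ v = s₀)
      (fun a b hab => by
        have h := hPSdep a b hab
        have hu' : a u = b u := hab u huS
        exact ⟨fun hx => ⟨h.mp hx.1, hu' ▸ hx.2⟩, fun hx => ⟨h.mpr hx.1, hu'.symm ▸ hx.2⟩⟩)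
      (fun a b hab => by
        have h := hPScdep a b hab
        have hv' : a v = b v := hab v hvS
        exact ⟨fun hx => ⟨h.mp hx.1, hv' ▸ hx.2⟩, fun hx => ⟨h.mpr hx.1, hv'.symm ▸ hx.2⟩⟩)]
    simp only [Fin.sum_univ_two, ZIn_pin T B Sᶜ PSc v]
    rcases fin2 s₀ with rfl | rfl <;>
      (rw [hNdef, hXdef, hY0def]; norm_num; try ring)
  -- expressing the two conditional probabilities
  have hconstraint : ∀ (τ'' : V → Fin 2), (∀ x ∈ Λ, x ≠ v → τ x = τ'' x) →
      ∀ σ : V → Fin 2, ((∀ x ∈ Λ, σ x = τ'' x) ↔ (PS σ ∧ (PSc σ ∧ σ v = τ'' v))) := by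
    intro τ'' hag σ
    constructor
    · intro h
      refine ⟨fun x hx hxv _ => (h x hx).trans (hag x hx hxv).symm,
        fun x hx hxv _ => (h x hx).trans (hag x hx hxv).symm, h v hvΛ⟩
    · rintro ⟨h1, h2, h3⟩ x hx
      by_cases hxv : x = v
      · subst hxv; exact h3
      · by_cases hxS : x ∈ S
        · exact (h1 x hx hxv hxS).trans (hag x hx hxv)
        · exact (h2 x hx hxv hxS).trans (hag x hx hxv)
  have hfI : ∀ (τ'' : V → Fin 2), (∀ x ∈ Λ, x ≠ v → τ x = τ'' x) →
      fI T B u Λ τ'' = N (τ'' v) / D (τ'' v) := by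
    intro τ'' hag
    have hcon := hconstraint τ'' hag
    rw [fI]
    rw [ZC_congr T B (Q := fun σ => (PS σ ∧ σ u = 0) ∧ (PSc σ ∧ σ v = τ'' v))
      (fun σ => ⟨fun h => ⟨⟨((hcon σ).mp h.1).1, h.2⟩,
          ((hcon σ).mp h.1).2⟩,
        fun h => ⟨(hcon σ).mpr ⟨h.1.1, h.2⟩, h.1.2⟩⟩)]
    rw [ZC_congr T B (Q := fun σ => PS σ ∧ (PSc σ ∧ σ v = τ'' v)) (fun σ => hcon σ)]
    rw [← mul_div_mul_left _ _ (ne_of_gt hcpos), hNum (τ'' v), hDen (τ'' v),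
      mul_div_mul_left _ _ (ne_of_gt (hXpos (τ'' v)))]
  have hfτ : fI T B u Λ τ = N (τ v) / D (τ v) := hfI τ (fun _ _ _ => rfl)
  have hfτ' : fI T B u Λ τ' = N (τ' v) / D (τ' v) := hfI τ' hagree
  by_cases hwΛ : w ∈ Λ
  · -- the spin at w is pinned, so the two probabilities agree
    have hYzero : ∀ t, t ≠ τ w → Y t = 0 := by
      intro t ht
      rw [hYdef]
      exact ZIn_zero T B S fun σ hX => ht (hX.2.symm.trans (hX.1 w hwΛ hwv hwS))
    have hY0zero : ∀ t, t ≠ τ w → Y0 t = 0 := by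
      intro t ht
      rw [hY0def]
      exact ZIn_zero T B S fun σ hX => ht (hX.2.symm.trans (hX.1.1 w hwΛ hwv hwS))
    have hratio : ∀ s : Fin 2, N s / D s = Y0 (τ w) / Y (τ w) := by
      intro s
      rcases fin2 (τ w) with hτw | hτw <;> rcases fin2 s with rfl | rfl <;>
        rw [hNdef, hDdef] <;> dsimp only <;> rw [hτw] <;>
        [rw [hYzero 1 (by rw [hτw]; decide), hY0zero 1 (by rw [hτw]; decide)];
         rw [hYzero 1 (by rw [hτw]; decide), hY0zero 1 (by rw [hτw]; decide)];
         rw [hYzero 0 (by rw [hτw]; decide), hY0zero 0 (by rw [hτw]; decide)];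
         rw [hYzero 0 (by rw [hτw]; decide), hY0zero 0 (by rw [hτw]; decide)]] <;>
        norm_num
      · exact mul_div_mul_left _ _ (ne_of_gt hB0)
      · exact mul_div_mul_left _ _ (ne_of_gt hB0)
    rw [hfτ, hfτ', hratio (τ v), hratio (τ' v), sub_self, abs_zero]
    exact pow_nonneg hlam0 _
  · -- the spin at w is free: use the Markov-chain contraction
    have hYpos' : ∀ t, 0 < Y t := fun t => hYpos t (fun h => absurd h hwΛ)
    set Λ' := insert w (Λ.erase v) with hΛ'def
    set ρ : Fin 2 → (V → Fin 2) := fun t x => if x = w then t else τ x with hρdef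
    have hwΛ' : w ∈ Λ' := Finset.mem_insert_self _ _
    set E : Fin 2 → ℝ := fun t =>
      B ^ (if (0:Fin 2) = t then 1 else 0) * X 0 + B ^ (if (1:Fin 2) = t then 1 else 0) * X 1
      with hEdef
    have hEpos : ∀ t, 0 < E t := by
      intro t
      rw [hEdef]
      exact add_pos (mul_pos (pow_pos hB0 _) (hXpos 0)) (mul_pos (pow_pos hB0 _) (hXpos 1))
    have hDen' : ∀ t₀ : Fin 2,
        c * ZC T B (fun σ => (PS σ ∧ σ w = t₀) ∧ PSc σ) = E t₀ * Y t₀ := by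
      intro t₀
      rw [hcdef, master2 T B S v w hadj hvS hwS hsplit (fun σ => PS σ ∧ σ w = t₀) PSc
        (fun a b hab => by
          have h := hPSdep a b hab
          have hw' : a w = b w := hab w hwS
          exact ⟨fun hx => ⟨h.mp hx.1, hw' ▸ hx.2⟩, fun hx => ⟨h.mpr hx.1, hw'.symm ▸ hx.2⟩⟩)
        hPScdep]
      simp only [Fin.sum_univ_two, ZIn_pin T B S PS w]
      rcases fin2 t₀ with rfl | rfl <;>
        (rw [hEdef, hXdef, hYdef]; norm_num; try ring)
    have hNum' : ∀ t₀ : Fin 2,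
        c * ZC T B (fun σ => ((PS σ ∧ σ u = 0) ∧ σ w = t₀) ∧ PSc σ) = E t₀ * Y0 t₀ := by
      intro t₀
      rw [hcdef, master2 T B S v w hadj hvS hwS hsplit
        (fun σ => (PS σ ∧ σ u = 0) ∧ σ w = t₀) PSc
        (fun a b hab => by
          have h := hPSdep a b hab
          have hw' : a w = b w := hab w hwS
          have hu' : a u = b u := hab u huS
          exact ⟨fun hx => ⟨⟨h.mp hx.1.1, hu' ▸ hx.1.2⟩, hw' ▸ hx.2⟩,
            fun hx => ⟨⟨h.mpr hx.1.1, hu'.symm ▸ hx.1.2⟩, hw'.symm ▸ hx.2⟩⟩)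
        hPScdep]
      simp only [Fin.sum_univ_two, ZIn_pin T B S (fun σ => PS σ ∧ σ u = 0) w]
      rcases fin2 t₀ with rfl | rfl <;>
        (rw [hEdef, hXdef, hY0def]; norm_num; try ring)
    have hgval : ∀ t : Fin 2, fI T B u Λ' (ρ t) = Y0 t / Y t := by
      intro t
      have hcon : ∀ σ : V → Fin 2,
          (∀ x ∈ Λ', σ x = ρ t x) ↔ ((PS σ ∧ σ w = t) ∧ PSc σ) := by
        intro σ
        constructor
        · intro h
          have hσw : σ w = t := (h w hwΛ').trans (if_pos rfl)
          refine ⟨⟨?_, hσw⟩, ?_⟩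
          · intro x hx hxv hxS
            have hxw : x ≠ w := fun hh => hwΛ (hh ▸ hx)
            exact (h x (Finset.mem_insert_of_mem (Finset.mem_erase.mpr ⟨hxv, hx⟩))).trans
              (if_neg hxw)
          · intro x hx hxv hxS
            have hxw : x ≠ w := fun hh => hwΛ (hh ▸ hx)
            exact (h x (Finset.mem_insert_of_mem (Finset.mem_erase.mpr ⟨hxv, hx⟩))).trans
              (if_neg hxw)
        · rintro ⟨⟨h1, h2⟩, h3⟩ x hx
          rcases Finset.mem_insert.mp hx with rfl | hx'
          · exact h2.trans (if_pos rfl).symm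
          · obtain ⟨hxv, hxΛ⟩ := Finset.mem_erase.mp hx'
            have hxw : x ≠ w := fun hh => hwΛ (hh ▸ hxΛ)
            have hval : σ x = τ x := by
              by_cases hxS : x ∈ S
              · exact h1 x hxΛ hxv hxS
              · exact h3 x hxΛ hxv hxS
            exact hval.trans (if_neg hxw).symm
      rw [fI]
      rw [ZC_congr T B (Q := fun σ => ((PS σ ∧ σ u = 0) ∧ σ w = t) ∧ PSc σ)
        (fun σ => ⟨fun h => ⟨⟨⟨((hcon σ).mp h.1).1.1, h.2⟩, ((hcon σ).mp h.1).1.2⟩,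
            ((hcon σ).mp h.1).2⟩,
          fun h => ⟨(hcon σ).mpr ⟨⟨h.1.1.1, h.1.2⟩, h.2⟩, h.1.1.2⟩⟩)]
      rw [ZC_congr T B (Q := fun σ => (PS σ ∧ σ w = t) ∧ PSc σ) hcon]
      rw [← mul_div_mul_left _ _ (ne_of_gt hcpos), hNum' t, hDen' t,
        mul_div_mul_left _ _ (ne_of_gt (hEpos t))]
    have hIH : |fI T B u Λ' (ρ 0) - fI T B u Λ' (ρ 1)| ≤ lam ^ m := by
      refine IH m (Nat.lt_succ_self m) Λ' w hwΛ' hdw (ρ 0) (ρ 1) ?_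
      intro x hx hxw
      show (if x = w then (0:Fin 2) else τ x) = (if x = w then (1:Fin 2) else τ x)
      rw [if_neg hxw, if_neg hxw]
    rw [hgval 0, hgval 1] at hIH
    have habs : |Y0 1 / Y 1 - Y0 0 / Y 0| ≤ lam ^ m := by
      rw [abs_sub_comm]
      exact hIH
    have key := key_alg (B := B) (a := Y 0) (b := Y 1) (g0 := Y0 0 / Y 0) (g1 := Y0 1 / Y 1)
      hB0 hB1 (hYpos' 0) (hYpos' 1)
    rw [div_mul_cancel₀ _ (ne_of_gt (hYpos' 0)), div_mul_cancel₀ _ (ne_of_gt (hYpos' 1))] at key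
    have hfinal : (1 - B) / (1 + B) * |Y0 1 / Y 1 - Y0 0 / Y 0| ≤ lam ^ (m + 1) := by
      rw [← hlamdef]
      calc lam * |Y0 1 / Y 1 - Y0 0 / Y 0| ≤ lam * lam ^ m :=
            mul_le_mul_of_nonneg_left habs hlam0
        _ = lam ^ (m + 1) := (pow_succ' lam m).symm
    have hexp : N 0 / D 0 - N 1 / D 1
        = (B * Y0 0 + Y0 1) / (B * Y 0 + Y 1) - (Y0 0 + B * Y0 1) / (Y 0 + B * Y 1) := by
      rw [hNdef, hDdef]
      norm_num
    rw [hfτ, hfτ']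
    rcases fin2 (τ v) with h1 | h1 <;> rcases fin2 (τ' v) with h2 | h2
    · exact absurd (h1.trans h2.symm) heq
    · rw [h1, h2, hexp]
      exact le_trans key hfinal
    · rw [abs_sub_comm, h2, h1, hexp]
      exact le_trans key hfinal
    · exact absurd (h1.trans h2.symm) heq

lemma telescope {V : Type} [Fintype V] (T : SimpleGraph V) (hT : T.IsTree) {B : ℝ}
    (hB0 : 0 < B) (hB1 : B < 1) (u : V) :
    ∀ U : Finset V, ∀ Λ : Finset V, U ⊆ Λ → ∀ τ τ' : V → Fin 2,
      (∀ x, x ∉ U → τ x = τ' x) →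
      |fI T B u Λ τ - fI T B u Λ τ'| ≤ ∑ v ∈ U, ((1 - B) / (1 + B)) ^ (T.dist v u) := by
  intro U
  induction U using Finset.induction_on with
  | empty =>
    intro Λ _ τ τ' h
    rw [fI_congr T B u Λ (fun x _ => h x (Finset.notMem_empty x)), sub_self, abs_zero,
      Finset.sum_empty]
  | @insert a U' haU' IH2 =>
    intro Λ hsub τ τ' hdiff
    set τ'' : V → Fin 2 := fun x => if x = a then τ' x else τ x with hτ''
    have haΛ : a ∈ Λ := hsub (Finset.mem_insert_self a U')
    have step1 : |fI T B u Λ τ - fI T B u Λ τ''| ≤ ((1 - B) / (1 + B)) ^ (T.dist a u) := by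
      refine single_site T hT hB0 hB1 u (T.dist a u) Λ a haΛ rfl τ τ'' ?_
      intro x _ hxa
      show τ x = (if x = a then τ' x else τ x)
      rw [if_neg hxa]
    have step2 : |fI T B u Λ τ'' - fI T B u Λ τ'|
        ≤ ∑ v ∈ U', ((1 - B) / (1 + B)) ^ (T.dist v u) := by
      refine IH2 Λ (fun x hx => hsub (Finset.mem_insert_of_mem hx)) τ'' τ' ?_
      intro x hx
      show (if x = a then τ' x else τ x) = τ' x
      by_cases hxa : x = a
      · rw [if_pos hxa]
      · rw [if_neg hxa]
        exact hdiff x (by simp [hxa, hx])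
    calc |fI T B u Λ τ - fI T B u Λ τ'|
        ≤ |fI T B u Λ τ - fI T B u Λ τ''| + |fI T B u Λ τ'' - fI T B u Λ τ'| :=
          abs_sub_le _ _ _
      _ ≤ ((1 - B) / (1 + B)) ^ (T.dist a u) + ∑ v ∈ U', ((1 - B) / (1 + B)) ^ (T.dist v u) :=
          add_le_add step1 step2
      _ = ∑ v ∈ insert a U', ((1 - B) / (1 + B)) ^ (T.dist v u) := by
          rw [Finset.sum_insert haU']

theorem stmt18 {V : Type} [Fintype V] (B : ℝ) (hB : B ∈ Set.Ioo (0 : ℝ) 1)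
    (T : SimpleGraph V) (hT : T.IsTree) (u : V) (Λ : Finset V)
    (U : Finset V) (hUΛ : U ⊆ Λ)
    (τ₁ τ₂ : ↥Λ → Fin 2) (hdiff : ∀ x : ↥Λ, (x : V) ∉ U → τ₁ x = τ₂ x) :
    |pottsCond T 2 B {σ | σ u = 0} {σ | ∀ x : ↥Λ, σ x = τ₁ x} -
        pottsCond T 2 B {σ | σ u = 0} {σ | ∀ x : ↥Λ, σ x = τ₂ x}| ≤
      ∑ v ∈ U, ((1 - B) / (1 + B)) ^ (T.dist u v) := by
  obtain ⟨hB0, hB1⟩ := hB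
  set τh1 : V → Fin 2 := fun x => if h : x ∈ Λ then τ₁ ⟨x, h⟩ else 0 with hτh1
  set τh2 : V → Fin 2 := fun x => if h : x ∈ Λ then τ₂ ⟨x, h⟩ else 0 with hτh2
  have hpc : ∀ (τ' : ↥Λ → Fin 2) (τh : V → Fin 2),
      (τh = fun x => if h : x ∈ Λ then τ' ⟨x, h⟩ else 0) →
      pottsCond T 2 B {σ | σ u = 0} {σ | ∀ x : ↥Λ, σ x = τ' x} = fI T B u Λ τh := by
    intro τ' τh hτh
    have hiffC : ∀ σ : V → Fin 2, (∀ x : ↥Λ, σ x = τ' x) ↔ (∀ x ∈ Λ, σ x = τh x) := by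
      intro σ
      subst hτh
      constructor
      · intro h x hx
        show σ x = dite (x ∈ Λ) (fun h => τ' ⟨x, h⟩) (fun _ => 0)
        rw [dif_pos hx]
        exact h ⟨x, hx⟩
      · intro h x
        have hx := h x x.2
        have h2 : (if h : (x:V) ∈ Λ then τ' ⟨(x:V), h⟩ else 0) = τ' x := by
          rw [dif_pos x.2]
        exact hx.trans h2
    rw [pottsCond, fI, ZC, ZC]
    congr 1
    · refine sum_ite_congr' _ _ _ _ _ _ (fun σ => ?_) (fun σ _ => rfl)
      exact ⟨fun h => ⟨(hiffC σ).mp h.2, h.1⟩, fun h => ⟨h.2, (hiffC σ).mpr h.1⟩⟩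
    · exact sum_ite_congr' _ _ _ _ _ _ (fun σ => hiffC σ) (fun σ _ => rfl)
  rw [hpc τ₁ τh1 hτh1, hpc τ₂ τh2 hτh2]
  have hdiff' : ∀ x, x ∉ U → τh1 x = τh2 x := by
    intro x hx
    show (if h : x ∈ Λ then τ₁ ⟨x, h⟩ else 0) = (if h : x ∈ Λ then τ₂ ⟨x, h⟩ else 0)
    by_cases h : x ∈ Λ
    · rw [dif_pos h, dif_pos h]
      exact hdiff ⟨x, h⟩ hx
    · rw [dif_neg h, dif_neg h]
  calc |fI T B u Λ τh1 - fI T B u Λ τh2|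
      ≤ ∑ v ∈ U, ((1 - B) / (1 + B)) ^ (T.dist v u) :=
        telescope T hT hB0 hB1 u U Λ hUΛ τh1 τh2 hdiff'
    _ = ∑ v ∈ U, ((1 - B) / (1 + B)) ^ (T.dist u v) := by
        refine Finset.sum_congr rfl fun v _ => ?_
        rw [SimpleGraph.dist_comm]
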